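/- arXiv:1302.3623 — 7 statements merged into one kernel-verified Lean document; each statement's English description precedes it below -/
import Mathlib

section
/- Let T be a bounded nonempty closed subset of ℝ with minimum a, and define the forward jump σ(t) = inf{s ∈ T : s > t} (with inf ∅ = max T) and backward jump ρ(t) = sup{s ∈ T : s < t} (with sup ∅ = a). Then for any t ∈ T with t > σ(a) (equivalently t ∈ T_κ), σ is continuous at t (as a function on T) if and only if σ(ρ(t)) = t. -/
open Set Filter Topology RealInnerProductSpace

open Classical in
/-- Forward jump operator of a time scale `T`, with convention `inf ∅ = sSup T`. -/
noncomputable def tsSigma (T : Set ℝ) (t : ℝ) : ℝ :=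
  if ({s | s ∈ T ∧ t < s}).Nonempty then sInf {s | s ∈ T ∧ t < s} else sSup T

open Classical in
/-- Backward jump operator of a time scale `T`, with convention `sup ∅ = sInf T`. -/
noncomputable def tsRho (T : Set ℝ) (t : ℝ) : ℝ :=
  if ({s | s ∈ T ∧ s < t}).Nonempty then sSup {s | s ∈ T ∧ s < t} else sInf T

/-- `u` is Δ-differentiable at `t` (w.r.t. the time scale `T`) with derivative `L`. -/
def HasDeltaDerivAt {E : Type*} [NormedAddCommGroup E] [NormedSpace ℝ E]
    (T : Set ℝ) (u : ℝ → E) (t : ℝ) (L : E) : Prop :=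
  Filter.Tendsto (fun s => (tsSigma T t - s)⁻¹ • (u (tsSigma T t) - u s))
    (nhdsWithin t (T \ {tsSigma T t})) (nhds L)

/-- `u` is ∇-differentiable at `t` (w.r.t. the time scale `T`) with derivative `L`. -/
def HasNablaDerivAt {E : Type*} [NormedAddCommGroup E] [NormedSpace ℝ E]
    (T : Set ℝ) (u : ℝ → E) (t : ℝ) (L : E) : Prop :=
  Filter.Tendsto (fun s => (s - tsRho T t)⁻¹ • (u s - u (tsRho T t)))
    (nhdsWithin t (T \ {tsRho T t})) (nhds L)

/-- `T^κ = {t ∈ T : t ≤ ρ(max T)}`. -/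
def Tup (T : Set ℝ) : Set ℝ := {t | t ∈ T ∧ t ≤ tsRho T (sSup T)}

/-- `T_κ = {t ∈ T : σ(min T) ≤ t}`. -/
def Tlow (T : Set ℝ) : Set ℝ := {t | t ∈ T ∧ tsSigma T (sInf T) ≤ t}

/-- For `t ∈ T` with `t > σ(min T)`, the forward jump `σ` is continuous at `t`
(as a function on `T`) iff `σ(ρ(t)) = t`. -/
theorem stmt_0 (T : Set ℝ) (hne : T.Nonempty) (hbd : Bornology.IsBounded T) (hcl : IsClosed T)
    (t : ℝ) (ht : t ∈ T) (htk : tsSigma T (sInf T) < t) :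
    ContinuousWithinAt (tsSigma T) T t ↔ tsSigma T (tsRho T t) = t := by
  classical
  have hba : BddAbove T := hbd.bddAbove
  have hbb : BddBelow T := hbd.bddBelow
  -- basic facts about sigma
  have hle_sigma : ∀ x ∈ T, x ≤ tsSigma T x := by
    intro x hx
    unfold tsSigma
    split_ifs with h
    · exact le_csInf h fun s hs => hs.2.le
    · exact le_csSup hba hx
  have hsigma_le : ∀ x : ℝ, ∀ s ∈ T, x < s → tsSigma T x ≤ s := by
    intro x s hs hxs
    unfold tsSigma
    rw [if_pos ⟨s, hs, hxs⟩]
    exact csInf_le (hbb.mono fun y hy => hy.1) ⟨hs, hxs⟩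
  -- min
  set a := sInf T with ha_def
  have ha : a ∈ T := hcl.csInf_mem hne hbb
  have hat : a < t := lt_of_le_of_lt (hle_sigma a ha) htk
  -- rho
  set S := {s | s ∈ T ∧ s < t} with hS_def
  have hSne : S.Nonempty := ⟨a, ha, hat⟩
  have hSba : BddAbove S := ⟨t, fun s hs => hs.2.le⟩
  have hrho : tsRho T t = sSup S := if_pos hSne
  set r := sSup S with hr_def
  have hrle : r ≤ t := csSup_le hSne fun s hs => hs.2.le
  have hub : ∀ s ∈ T, s < t → s ≤ r := fun s hs hst => le_csSup hSba ⟨hs, hst⟩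
  have hgap : ∀ s ∈ T, r < s → t ≤ s := by
    intro s hs hrs
    by_contra hlt
    exact absurd (hub s hs (lt_of_not_ge hlt)) (not_le.mpr hrs)
  have hsigt_ge : t ≤ tsSigma T t := hle_sigma t ht
  -- right-side continuity estimate, valid whenever σ t = t
  have hright : tsSigma T t = t → ∀ ε > (0:ℝ), ∃ δ > (0:ℝ), ∀ x ∈ T, t ≤ x → x - t < δ →
      t ≤ tsSigma T x ∧ tsSigma T x - t < ε := by
    intro hσt ε hε
    by_cases hRt : ({s | s ∈ T ∧ t < s}).Nonempty
    · have hInf : sInf {s | s ∈ T ∧ t < s} = t := by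
        have h2 := hσt
        unfold tsSigma at h2
        rwa [if_pos hRt] at h2
      obtain ⟨s₀, hs₀, hs₀lt⟩ : ∃ s₀ ∈ {s | s ∈ T ∧ t < s}, s₀ < t + ε :=
        exists_lt_of_csInf_lt hRt (by rw [hInf]; linarith)
      refine ⟨s₀ - t, by linarith [hs₀.2], ?_⟩
      intro x hx htx hxδ
      have hxs₀ : x < s₀ := by linarith
      have h1 : tsSigma T x ≤ s₀ := hsigma_le x s₀ hs₀.1 hxs₀
      have h2 : x ≤ tsSigma T x := hle_sigma x hx
      exact ⟨le_trans htx h2, by linarith⟩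
    · refine ⟨1, one_pos, ?_⟩
      intro x hx htx _
      rcases eq_or_lt_of_le htx with heq | hlt
      · rw [← heq]; exact ⟨by rw [hσt], by rw [hσt]; linarith⟩
      · exact absurd ⟨x, hx, hlt⟩ hRt
  rw [hrho]
  rcases lt_or_eq_of_le hrle with hrt | hrt
  · -- left-scattered case: both sides hold
    have hRHS : tsSigma T r = t := by
      unfold tsSigma
      rw [if_pos ⟨t, ht, hrt⟩]
      exact le_antisymm (csInf_le (hbb.mono fun y hy => hy.1) ⟨ht, hrt⟩)
        (le_csInf ⟨t, ht, hrt⟩ fun s hs => hgap s hs.1 hs.2)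
    refine ⟨fun _ => hRHS, fun _ => ?_⟩
    rcases eq_or_lt_of_le hsigt_ge with hσt | hσt
    · -- σ t = t : use right estimate; left is empty near t
      rw [Metric.continuousWithinAt_iff]
      intro ε hε
      obtain ⟨δ, hδ, hδprop⟩ := hright hσt.symm ε hε
      refine ⟨min δ (t - r), lt_min hδ (by linarith), ?_⟩
      intro x hx hdx
      rw [Real.dist_eq, abs_lt] at hdx
      have hm1 : min δ (t - r) ≤ δ := min_le_left _ _
      have hm2 : min δ (t - r) ≤ t - r := min_le_right _ _
      have hxt : t ≤ x := by
        by_contra hlt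
        have hxr := hub x hx (lt_of_not_ge hlt)
        linarith [hdx.1]
      obtain ⟨h1, h2⟩ := hδprop x hx hxt (by linarith [hdx.2])
      rw [Real.dist_eq, ← hσt, abs_lt]
      constructor <;> linarith
    · -- σ t > t : t is isolated in T
      rw [Metric.continuousWithinAt_iff]
      intro ε hε
      refine ⟨min (t - r) (tsSigma T t - t), lt_min (by linarith) (by linarith), ?_⟩
      intro x hx hdx
      rw [Real.dist_eq, abs_lt] at hdx
      have hm1 : min (t - r) (tsSigma T t - t) ≤ t - r := min_le_left _ _
      have hm2 : min (t - r) (tsSigma T t - t) ≤ tsSigma T t - t := min_le_right _ _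
      have hx_eq : x = t := by
        rcases lt_trichotomy x t with h | h | h
        · have := hub x hx h
          linarith [hdx.1]
        · exact h
        · have := hsigma_le t x hx h
          linarith [hdx.2]
      rw [hx_eq]
      simpa using hε
  · -- left-dense case: r = t
    have htcl : t ∈ closure S := hrt ▸ csSup_mem_closure hSne hSba
    have hSsub : S ⊆ T := fun s hs => hs.1
    rcases eq_or_lt_of_le hsigt_ge with hσt | hσt
    · -- σ t = t : both sides hold
      have hRHS : tsSigma T r = t := by rw [hrt, ← hσt]
      refine ⟨fun _ => hRHS, fun _ => ?_⟩
      rw [Metric.continuousWithinAt_iff]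
      intro ε hε
      obtain ⟨δ, hδ, hδprop⟩ := hright hσt.symm ε hε
      refine ⟨min δ ε, lt_min hδ hε, ?_⟩
      intro x hx hdx
      rw [Real.dist_eq, abs_lt] at hdx
      have hm1 : min δ ε ≤ δ := min_le_left _ _
      have hm2 : min δ ε ≤ ε := min_le_right _ _
      rw [Real.dist_eq, ← hσt, abs_lt]
      rcases le_or_gt t x with hxt | hxt
      · obtain ⟨h1, h2⟩ := hδprop x hx hxt (by linarith [hdx.2])
        constructor <;> linarith
      · have h1 : tsSigma T x ≤ t := hsigma_le x t ht hxt
        have h2 : x ≤ tsSigma T x := hle_sigma x hx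
        constructor <;> linarith [hdx.1]
    · -- σ t > t : both sides fail
      have hRHS : tsSigma T r ≠ t := by rw [hrt]; exact ne_of_gt hσt
      refine ⟨fun hcont => absurd ?_ (not_le.mpr hσt), fun h => absurd h hRHS⟩
      haveI : (𝓝[S] t).NeBot := mem_closure_iff_nhdsWithin_neBot.mp htcl
      have h' : Filter.Tendsto (tsSigma T) (𝓝[S] t) (𝓝 (tsSigma T t)) :=
        hcont.mono_left (nhdsWithin_mono t hSsub)
      have hev : ∀ᶠ x in 𝓝[S] t, tsSigma T x ≤ t := by
        filter_upwards [self_mem_nhdsWithin] with x hx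
        exact hsigma_le x t ht hx.2
      exact le_of_tendsto h' hev
end

section
/- Let T be a bounded time scale and t ∈ T. The forward jump operator σ : T → ℝ is continuous at t (in the subspace topology) if and only if t = min T, or t is right-dense (σ(t) = t), or t is left-scattered (ρ(t) < t). -/
open Set Filter Topology RealInnerProductSpace

/-- If `s ∈ T` and `x < s` then `σ(x) ≤ s`. -/
lemma tsSigma_le {T : Set ℝ} (hbd : Bornology.IsBounded T) {x s : ℝ}
    (hs : s ∈ T) (hxs : x < s) : tsSigma T x ≤ s := by
  have hne : ({r | r ∈ T ∧ x < r}).Nonempty := ⟨s, hs, hxs⟩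
  rw [tsSigma, if_pos hne]
  exact csInf_le (hbd.bddBelow.mono (fun r hr => hr.1)) ⟨hs, hxs⟩

/-- If `x ∈ T` then `x ≤ σ(x)`. -/
lemma le_tsSigma {T : Set ℝ} (hbd : Bornology.IsBounded T) {x : ℝ} (hx : x ∈ T) :
    x ≤ tsSigma T x := by
  rw [tsSigma]
  split_ifs with h
  · exact le_csInf h (fun r hr => hr.2.le)
  · exact le_csSup hbd.bddAbove hx

/-- If `x ∈ T` then `ρ(x) ≤ x`. -/
lemma tsRho_le {T : Set ℝ} (hbd : Bornology.IsBounded T) {x : ℝ} (hx : x ∈ T) :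
    tsRho T x ≤ x := by
  rw [tsRho]
  split_ifs with h
  · exact csSup_le h (fun r hr => hr.2.le)
  · exact csInf_le hbd.bddBelow hx

/-- If `s ∈ T` and `s < x` then `s ≤ ρ(x)`. -/
lemma le_tsRho {T : Set ℝ} (hbd : Bornology.IsBounded T) {x s : ℝ}
    (hs : s ∈ T) (hsx : s < x) : s ≤ tsRho T x := by
  have hne : ({r | r ∈ T ∧ r < x}).Nonempty := ⟨s, hs, hsx⟩
  rw [tsRho, if_pos hne]
  exact le_csSup (hbd.bddAbove.mono (fun r hr => hr.1)) ⟨hs, hsx⟩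


/-- `σ` is continuous at `t ∈ T` iff `t = min T`, or `t` is right-dense,
or `t` is left-scattered. -/
theorem stmt_2 (T : Set ℝ) (hne : T.Nonempty) (hbd : Bornology.IsBounded T) (hcl : IsClosed T)
    (hcard : ∃ x ∈ T, ∃ y ∈ T, ∃ z ∈ T, x ≠ y ∧ x ≠ z ∧ y ≠ z)
    (t : ℝ) (ht : t ∈ T) :
    ContinuousWithinAt (tsSigma T) T t ↔
      t = sInf T ∨ tsSigma T t = t ∨ tsRho T t < t := by
  constructor
  · intro hcont
    by_contra hcon
    push_neg at hcon
    obtain ⟨hmin, hsig, hrho⟩ := hcon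
    have hsgt : t < tsSigma T t := lt_of_le_of_ne (le_tsSigma hbd ht) (Ne.symm hsig)
    have hinf : sInf T < t := lt_of_le_of_ne (csInf_le hbd.bddBelow ht) (Ne.symm hmin)
    have hinfmem : sInf T ∈ T := hcl.csInf_mem hne hbd.bddBelow
    have hbelow : ({s | s ∈ T ∧ s < t}).Nonempty := ⟨sInf T, hinfmem, hinf⟩
    have hrho_eq : sSup {s | s ∈ T ∧ s < t} = t := by
      have h1 : tsRho T t = t := le_antisymm (tsRho_le hbd ht) hrho
      rwa [tsRho, if_pos hbelow] at h1
    rw [Metric.continuousWithinAt_iff] at hcont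
    obtain ⟨δ, hδ, hδ'⟩ := hcont (tsSigma T t - t) (by linarith)
    obtain ⟨s, hs, hst⟩ : ∃ s ∈ {s | s ∈ T ∧ s < t}, t - δ < s :=
      exists_lt_of_lt_csSup hbelow (by rw [hrho_eq]; linarith)
    have hd : dist s t < δ := by
      rw [Real.dist_eq, abs_of_nonpos (by linarith [hs.2])]; linarith
    have h2 := hδ' hs.1 hd
    have h3 : tsSigma T s ≤ t := tsSigma_le hbd ht hs.2
    rw [Real.dist_eq, abs_of_nonpos (by linarith)] at h2
    linarith
  · intro h
    rw [Metric.continuousWithinAt_iff]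
    intro ε hε
    rcases eq_or_lt_of_le (le_tsSigma hbd ht) with hrd | hsgt
    · -- right-dense: σ(t) = t
      by_cases habove : ({s | s ∈ T ∧ t < s}).Nonempty
      · have hinf_eq : sInf {s | s ∈ T ∧ t < s} = t := by
          rw [tsSigma, if_pos habove] at hrd; exact hrd.symm
        obtain ⟨r, hr, hrε⟩ : ∃ r ∈ {s | s ∈ T ∧ t < s}, r < t + ε :=
          exists_lt_of_csInf_lt habove (by rw [hinf_eq]; linarith)
        refine ⟨min ε (r - t), lt_min hε (by linarith [hr.2]), fun {s} hs hd => ?_⟩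
        rw [Real.dist_eq] at hd
        rcases lt_trichotomy s t with hlt | heq | hgt
        · have h1 : s ≤ tsSigma T s := le_tsSigma hbd hs
          have h2 : tsSigma T s ≤ t := tsSigma_le hbd ht hlt
          rw [Real.dist_eq, ← hrd, abs_of_nonpos (by linarith)]
          rw [abs_of_nonpos (by linarith)] at hd
          have := min_le_left ε (r - t)
          linarith
        · rw [heq]; simpa using hε
        · have hsr : s < r := by
            rw [abs_of_nonneg (by linarith)] at hd
            have := min_le_right ε (r - t)
            linarith
          have h1 : t < tsSigma T s := lt_of_lt_of_le hgt (le_tsSigma hbd hs)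
          have h2 : tsSigma T s ≤ r := tsSigma_le hbd hr.1 hsr
          rw [Real.dist_eq, ← hrd, abs_of_nonneg (by linarith)]
          linarith
      · -- no points above t: σ(t) = sSup T = t, so all of T is ≤ t
        refine ⟨ε, hε, fun {s} hs hd => ?_⟩
        have hsle : s ≤ t := by
          by_contra h'
          exact habove ⟨s, hs, lt_of_not_ge h'⟩
        rcases eq_or_lt_of_le hsle with heq | hlt
        · rw [heq]; simpa using hε
        · have h1 : s ≤ tsSigma T s := le_tsSigma hbd hs
          have h2 : tsSigma T s ≤ t := tsSigma_le hbd ht hlt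
          rw [Real.dist_eq, ← hrd, abs_of_nonpos (by linarith)]
          rw [Real.dist_eq, abs_of_nonpos (by linarith)] at hd
          linarith
    · -- right-scattered: then t = min T or left-scattered, and t is isolated
      have hiso : ∃ δ > 0, ∀ s ∈ T, dist s t < δ → s = t := by
        rcases h with hmin | hrd | hls
        · refine ⟨tsSigma T t - t, by linarith, fun s hs hd => ?_⟩
          have h1 : sInf T ≤ s := csInf_le hbd.bddBelow hs
          rw [← hmin] at h1
          rcases eq_or_lt_of_le h1 with heq | hgt
          · exact heq.symm
          · exfalso
            have := tsSigma_le hbd hs hgt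
            rw [Real.dist_eq, abs_of_nonneg (by linarith)] at hd
            linarith
        · exact absurd hrd (ne_of_gt hsgt)
        · refine ⟨min (tsSigma T t - t) (t - tsRho T t), lt_min (by linarith) (by linarith),
            fun s hs hd => ?_⟩
          rcases lt_trichotomy s t with hlt | heq | hgt
          · exfalso
            have h1 : s ≤ tsRho T t := le_tsRho hbd hs hlt
            rw [Real.dist_eq, abs_of_nonpos (by linarith)] at hd
            have := min_le_right (tsSigma T t - t) (t - tsRho T t)
            linarith
          · exact heq
          · exfalso
            have h1 : tsSigma T t ≤ s := tsSigma_le hbd hs hgt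
            rw [Real.dist_eq, abs_of_nonneg (by linarith)] at hd
            have := min_le_left (tsSigma T t - t) (t - tsRho T t)
            linarith
      obtain ⟨δ, hδ, hδ'⟩ := hiso
      refine ⟨δ, hδ, fun {s} hs hd => ?_⟩
      rw [hδ' s hs hd]
      simpa using hε
end

section
/- Let T be a bounded time scale. The forward jump operator σ is continuous on T (in the subspace topology) if and only if no point of T other than a = min T is both right-scattered and left-dense; that is, (RS ∩ LD) \ {a} = ∅. -/
open Set Filter Topology RealInnerProductSpace

/-- `σ` is continuous on `T` iff no point of `T` other than `min T` is
both right-scattered and left-dense. -/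
theorem stmt_3 (T : Set ℝ) (hne : T.Nonempty) (hbd : Bornology.IsBounded T) (hcl : IsClosed T) :
    ContinuousOn (tsSigma T) T ↔
      {t | t ∈ T ∧ t < tsSigma T t ∧ tsRho T t = t} \ {sInf T} = ∅ := by

  have hBA : BddAbove T := hbd.bddAbove
  have hBB : BddBelow T := hbd.bddBelow
  have sigma_ge : ∀ t ∈ T, t ≤ tsSigma T t := by
    intro t ht
    unfold tsSigma
    split_ifs with h
    · exact le_csInf h (fun s hs => hs.2.le)
    · exact le_csSup hBA ht
  have sigma_le : ∀ t u, u ∈ T → t < u → tsSigma T t ≤ u := by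
    intro t u hu htu
    unfold tsSigma
    rw [if_pos ⟨u, hu, htu⟩]
    exact csInf_le (hBB.mono (fun s hs => hs.1)) ⟨hu, htu⟩
  have sigma_le_sup : ∀ s : ℝ, tsSigma T s ≤ sSup T := by
    intro s
    unfold tsSigma
    split_ifs with h
    · obtain ⟨w, hw⟩ := h
      exact (csInf_le (hBB.mono (fun x hx => hx.1)) hw).trans (le_csSup hBA hw.1)
    · exact le_rfl
  constructor
  · intro hcont
    rw [eq_empty_iff_forall_notMem]
    rintro t ⟨⟨ht, hrs, hld⟩, hta⟩
    have hta' : t ≠ sInf T := hta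
    have hat : sInf T < t := lt_of_le_of_ne (csInf_le hBB ht) (Ne.symm hta')
    set L := {s | s ∈ T ∧ s < t} with hLdef
    have hLne : L.Nonempty := ⟨sInf T, hcl.csInf_mem hne hBB, hat⟩
    have hLB : BddAbove L := hBA.mono (fun s hs => hs.1)
    have hsup : sSup L = t := by
      unfold tsRho at hld; rwa [if_pos hLne] at hld
    have htc : t ∈ closure L := hsup ▸ csSup_mem_closure hLne hLB
    have hnb : (𝓝[L] t).NeBot := mem_closure_iff_nhdsWithin_neBot.mp htc
    have h1 : Tendsto (tsSigma T) (𝓝[L] t) (𝓝 (tsSigma T t)) :=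
      (hcont t ht).mono_left (nhdsWithin_mono t (fun s hs => hs.1))
    have h2 : ∀ᶠ s in 𝓝[L] t, t < tsSigma T s := h1.eventually (eventually_gt_nhds hrs)
    have h3 : ∀ᶠ s in 𝓝[L] t, tsSigma T s ≤ t :=
      eventually_mem_nhdsWithin.mono (fun s hs => sigma_le s t ht hs.2)
    obtain ⟨s, hs1, hs2⟩ := (h2.and h3).exists
    exact absurd (hs1.trans_le hs2) (lt_irrefl t)
  · intro hcond t ht
    by_cases hrs : t < tsSigma T t
    · -- t is isolated in T
      obtain ⟨l, hl, hkey⟩ : ∃ l, l < t ∧ ∀ s ∈ T, l < s → s < tsSigma T t → s = t := by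
        by_cases hta : t = sInf T
        · refine ⟨t - 1, by linarith, fun s hs hls hst => ?_⟩
          have h1 : t ≤ s := hta ▸ csInf_le hBB hs
          rcases eq_or_lt_of_le h1 with h | h
          · exact h.symm
          · exact absurd (sigma_le t s hs h) (not_le.mpr hst)
        · have hnmem := eq_empty_iff_forall_notMem.mp hcond t
          have hld : tsRho T t ≠ t := by
            intro h
            exact hnmem ⟨⟨ht, hrs, h⟩, hta⟩
          have hat : sInf T < t := lt_of_le_of_ne (csInf_le hBB ht) (Ne.symm hta)
          have hLne : ({s | s ∈ T ∧ s < t}).Nonempty :=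
            ⟨sInf T, hcl.csInf_mem hne hBB, hat⟩
          have hrho : tsRho T t = sSup {s | s ∈ T ∧ s < t} := by
            unfold tsRho; rw [if_pos hLne]
          have hrle : tsRho T t ≤ t := by
            rw [hrho]; exact csSup_le hLne (fun s hs => hs.2.le)
          have hrlt : tsRho T t < t := lt_of_le_of_ne hrle hld
          refine ⟨tsRho T t, hrlt, fun s hs hls hst => ?_⟩
          rcases lt_trichotomy s t with h | h | h
          · exact absurd (le_csSup (hBA.mono (fun x (hx : x ∈ {s | s ∈ T ∧ s < t}) => hx.1)) (⟨hs, h⟩ : s ∈ {s | s ∈ T ∧ s < t}))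
              (by rw [← hrho]; exact not_le.mpr hls)
          · exact h
          · exact absurd (sigma_le t s hs h) (not_le.mpr hst)
      have hmem : {t} ∈ 𝓝[T] t := by
        rw [mem_nhdsWithin]
        exact ⟨Ioo l (tsSigma T t), isOpen_Ioo, ⟨hl, hrs⟩,
          fun s ⟨hs1, hs2⟩ => hkey s hs2 hs1.1 hs1.2⟩
      have hle : 𝓝[T] t ≤ pure t := le_pure_iff.mpr hmem
      exact (tendsto_pure_nhds (tsSigma T) t).mono_left hle
    · have heq : tsSigma T t = t := le_antisymm (not_lt.mp hrs) (sigma_ge t ht)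
      have : Tendsto (tsSigma T) (𝓝[T] t) (𝓝 t) := by
        rw [tendsto_order]
        constructor
        · intro l hl
          filter_upwards [nhdsWithin_le_nhds (Ioi_mem_nhds hl), eventually_mem_nhdsWithin]
            with s hs hsT
          exact hs.trans_le (sigma_ge s hsT)
        · intro u hu
          by_cases hS : ({s | s ∈ T ∧ t < s}).Nonempty
          · have hinf : sInf {s | s ∈ T ∧ t < s} = t := by
              unfold tsSigma at heq; rwa [if_pos hS] at heq
            obtain ⟨w, hw, hwu⟩ := exists_lt_of_csInf_lt hS (by rw [hinf]; exact hu : sInf {s | s ∈ T ∧ t < s} < u)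
            filter_upwards [nhdsWithin_le_nhds (Iio_mem_nhds hw.2), eventually_mem_nhdsWithin]
              with s hs hsT
            exact (sigma_le s w hw.1 hs).trans_lt hwu
          · have hmax : ∀ s ∈ T, s ≤ t := fun s hs => not_lt.mp (fun h => hS ⟨s, hs, h⟩)
            have hsup : sSup T = t := le_antisymm (csSup_le hne hmax) (le_csSup hBA ht)
            filter_upwards [eventually_mem_nhdsWithin] with s hsT
            exact (sigma_le_sup s).trans_lt (hsup ▸ hu)
      rwa [ContinuousWithinAt, heq]
end

section
/- Let T be a bounded time scale with σ continuous on T. Then every function u : T → ℝⁿ that is rd-continuous (continuous at every right-dense point and admitting left-sided limits at every left-dense point) is continuous on T. -/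
open Set Filter Topology RealInnerProductSpace

/-- `t ≤ σ(t)` for `t ∈ T`. -/
lemma tsSigma_ge_aux {T : Set ℝ} (hbd : Bornology.IsBounded T) {t : ℝ} (ht : t ∈ T) :
    t ≤ tsSigma T t := by
  unfold tsSigma
  split_ifs with h
  · exact le_csInf h (fun s hs => hs.2.le)
  · exact le_csSup hbd.bddAbove ht

/-- If `s ∈ T` and `t < s` then `σ(t) ≤ s`. -/
lemma tsSigma_le_aux {T : Set ℝ} (hbd : Bornology.IsBounded T) {t s : ℝ}
    (hs : s ∈ T) (hts : t < s) : tsSigma T t ≤ s := by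
  unfold tsSigma
  rw [if_pos ⟨s, hs, hts⟩]
  exact csInf_le (hbd.bddBelow.mono (fun x hx => hx.1)) ⟨hs, hts⟩

/-- If `σ` is continuous on `T`, every rd-continuous function `u : T → ℝⁿ`
(continuous at right-dense points, left-sided limits at left-dense points) is continuous on `T`. -/
theorem stmt_5 (T : Set ℝ) (hne : T.Nonempty) (hbd : Bornology.IsBounded T) (hcl : IsClosed T)
    (hcont : ContinuousOn (tsSigma T) T)
    (n : ℕ) (u : ℝ → EuclideanSpace ℝ (Fin n))
    (hrd : ∀ t ∈ T, tsSigma T t = t → ContinuousWithinAt u T t)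
    (hld : ∀ t ∈ T, tsRho T t = t →
      ∃ l : EuclideanSpace ℝ (Fin n), Filter.Tendsto u (nhdsWithin t (T ∩ Set.Iio t)) (nhds l)) :
    ContinuousOn u T := by
  intro t ht
  rcases eq_or_lt_of_le (tsSigma_ge_aux hbd ht) with h | h
  · exact hrd t ht h.symm
  · -- `t` is right-scattered: `t < σ t`
    by_cases hnb : (nhdsWithin t (T ∩ Set.Iio t)).NeBot
    · -- `t` left-dense: contradiction with continuity of σ
      exfalso
      have hσt : Filter.Tendsto (tsSigma T) (nhdsWithin t (T ∩ Set.Iio t))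
          (nhds (tsSigma T t)) :=
        (hcont t ht).mono_left (nhdsWithin_mono _ inter_subset_left)
      have hev : ∀ᶠ s in nhdsWithin t (T ∩ Set.Iio t), tsSigma T s ≤ t := by
        filter_upwards [self_mem_nhdsWithin] with s hs
        exact tsSigma_le_aux hbd ht hs.2
      have := le_of_tendsto hσt hev
      linarith
    · -- `t` is isolated in `T`
      rw [not_neBot] at hnb
      have hcls : t ∉ closure (T ∩ Set.Iio t) := by
        rw [mem_closure_iff_nhdsWithin_neBot]
        exact fun h' => h'.ne hnb
      have h1 : ∀ᶠ s in nhds t, s ∉ T ∩ Set.Iio t :=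
        (isClosed_closure.isOpen_compl.eventually_mem hcls).mono
          (fun s hs hmem => hs (subset_closure hmem))
      have h2 : ∀ᶠ s in nhds t, s < tsSigma T t :=
        isOpen_Iio.eventually_mem (by exact h)
      have key : ∀ᶠ s in nhdsWithin t T, u s = u t := by
        filter_upwards [self_mem_nhdsWithin, h1.filter_mono nhdsWithin_le_nhds,
          h2.filter_mono nhdsWithin_le_nhds] with s hsT hs1 hs2
        have hst : t ≤ s := not_lt.1 (fun hlt => hs1 ⟨hsT, hlt⟩)
        rcases eq_or_lt_of_le hst with h' | h'
        · rw [← h']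
        · exact absurd (tsSigma_le_aux hbd hsT h') (not_le.2 hs2)
      exact Filter.Tendsto.congr' (by filter_upwards [key] with s hs; exact hs.symm)
        tendsto_const_nhds
end

section
/- Leibniz formula mixing Δ and ∇ derivatives: Let T be a bounded time scale, u, v : T → ℝⁿ, and t ∈ T^κ_κ. If σ is ∇-differentiable at t, u is Δ-differentiable at t, and v is ∇-differentiable at t, then the scalar function (u ∘ σ) · v is ∇-differentiable at t with ((u ∘ σ) · v)^∇(t) = u(t) · v^∇(t) + σ^∇(t) (u^Δ(t) · v(t)), where · denotes the Euclidean inner product. -/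
open Set Filter Topology RealInnerProductSpace

section aux

variable {T : Set ℝ} (hne : T.Nonempty) (hbd : Bornology.IsBounded T) (hcl : IsClosed T)
include hne hbd hcl
set_option linter.unusedSectionVars false

lemma tsSigma_mem (t : ℝ) : tsSigma T t ∈ T := by
  unfold tsSigma
  split_ifs with h
  · have h1 : BddBelow {s | s ∈ T ∧ t < s} := hbd.bddBelow.mono (fun x hx => hx.1)
    exact closure_minimal (fun x (hx : x ∈ T ∧ t < x) => hx.1) hcl (csInf_mem_closure h h1)
  · exact hcl.csSup_mem hne hbd.bddAbove

lemma tsSigma_le_s11 {t x : ℝ} (hx : x ∈ T) (htx : t < x) : tsSigma T t ≤ x := by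
  unfold tsSigma
  rw [if_pos ⟨x, hx, htx⟩]
  exact csInf_le (hbd.bddBelow.mono (fun y hy => hy.1)) ⟨hx, htx⟩

lemma le_tsSigma_s11 {t : ℝ} (ht : t ∈ T) : t ≤ tsSigma T t := by
  unfold tsSigma
  split_ifs with h
  · exact le_csInf h (fun b hb => hb.2.le)
  · exact le_csSup hbd.bddAbove ht

lemma tsRho_mem (t : ℝ) : tsRho T t ∈ T := by
  unfold tsRho
  split_ifs with h
  · have h1 : BddAbove {s | s ∈ T ∧ s < t} := hbd.bddAbove.mono (fun x hx => hx.1)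
    exact closure_minimal (fun x (hx : x ∈ T ∧ x < t) => hx.1) hcl (csSup_mem_closure h h1)
  · exact hcl.csInf_mem hne hbd.bddBelow

lemma tsRho_le_s11 {t : ℝ} (ht : t ∈ T) : tsRho T t ≤ t := by
  unfold tsRho
  split_ifs with h
  · exact csSup_le h (fun b hb => hb.2.le)
  · exact csInf_le hbd.bddBelow ht

lemma le_tsRho_s11 {t x : ℝ} (hx : x ∈ T) (hxt : x < t) : x ≤ tsRho T t := by
  unfold tsRho
  rw [if_pos ⟨x, hx, hxt⟩]
  exact le_csSup (hbd.bddAbove.mono (fun y hy => hy.1)) ⟨hx, hxt⟩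

/-- If `ρ(t) < t` then `σ(ρ(t)) = t`. -/
lemma tsSigma_tsRho {t : ℝ} (ht : t ∈ T) (h : tsRho T t < t) :
    tsSigma T (tsRho T t) = t := by
  have hset : tsSigma T (tsRho T t) = sInf {s | s ∈ T ∧ tsRho T t < s} := by
    unfold tsSigma; rw [if_pos ⟨t, ht, h⟩]
  refine le_antisymm (tsSigma_le_s11 hne hbd hcl ht h) ?_
  rw [hset]
  refine le_csInf ⟨t, ht, h⟩ (fun b hb => ?_)
  by_contra hbt
  push_neg at hbt
  exact absurd (le_tsRho_s11 hne hbd hcl hb.1 hbt) (not_le.mpr hb.2)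

/-- If `ρ(t) = t` and `s ∈ T`, `s < t`, there is a point of `T` strictly between. -/
lemma exists_between_of_tsRho_eq {t : ℝ} (hrt : tsRho T t = t) {s : ℝ} (hs : s ∈ T)
    (h : s < t) : ∃ x ∈ T, s < x ∧ x < t := by
  have hne' : ({x | x ∈ T ∧ x < t}).Nonempty := ⟨s, hs, h⟩
  have hsup : sSup {x | x ∈ T ∧ x < t} = t := by
    have : tsRho T t = sSup {x | x ∈ T ∧ x < t} := by unfold tsRho; rw [if_pos hne']
    rw [← this, hrt]
  obtain ⟨x, hx, hsx⟩ := exists_lt_of_lt_csSup hne' (by rw [hsup]; exact h)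
  exact ⟨x, hx.1, hsx, hx.2⟩

end aux

lemma pure_lim {α β : Type*} [TopologicalSpace β] [T2Space β] {f : α → β} {t : α} {l : β}
    (h : Filter.Tendsto f (pure t) (nhds l)) : f t = l :=
  tendsto_nhds_unique (tendsto_pure_nhds f t) h

lemma key_lemma {T : Set ℝ} (hne : T.Nonempty) (hbd : Bornology.IsBounded T) (hcl : IsClosed T)
    {n : ℕ} {u v : ℝ → EuclideanSpace ℝ (Fin n)} {t : ℝ} (htT : t ∈ T)
    (hσt : tsSigma T t = t) (hσr : tsSigma T (tsRho T t) = t)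
    {d : ℝ} (hσ : HasNablaDerivAt T (tsSigma T) t d)
    {L : EuclideanSpace ℝ (Fin n)} (hu : HasDeltaDerivAt T u t L)
    {M : EuclideanSpace ℝ (Fin n)} (hv : HasNablaDerivAt T v t M)
    (hvM : v t - v (tsRho T t) = (t - tsRho T t) • M)
    (htrd : (t - tsRho T t) * d = 0)
    (hS2 : ∀ s ∈ T, s ≠ tsRho T t → tsSigma T s = t → s = t)
    (hcase : d = 0 ∨ tsRho T t = t) :
    HasNablaDerivAt T (fun s => ⟪u (tsSigma T s), v s⟫) t (⟪u t, M⟫ + d * ⟪L, v t⟫) := by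
  unfold HasNablaDerivAt at hσ hv ⊢
  unfold HasDeltaDerivAt at hu
  set r := tsRho T t with hr
  set F := 𝓝[T \ {r}] t with hF
  have hmem : ∀ᶠ s in F, s ∈ T \ {r} := eventually_mem_nhdsWithin
  have hsr : Tendsto (fun s : ℝ => s - r) F (𝓝 (t - r)) :=
    ((continuous_id.sub continuous_const).tendsto t).mono_left nhdsWithin_le_nhds
  -- v s → v t
  have hv' : Tendsto v F (𝓝 (v t)) := by
    have h1 : Tendsto (fun s => v r + (s - r) • ((s - r)⁻¹ • (v s - v r))) F
        (𝓝 (v r + (t - r) • M)) := tendsto_const_nhds.add (hsr.smul hv)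
    have h2 : (fun s => v r + (s - r) • ((s - r)⁻¹ • (v s - v r))) =ᶠ[F] v := by
      filter_upwards [hmem] with s hs
      rw [smul_inv_smul₀ (sub_ne_zero.mpr (show s ≠ r by simpa using hs.2)), add_sub_cancel]
    have h3 := h1.congr' h2
    rwa [← hvM, add_sub_cancel] at h3
  -- nabla derivative of u ∘ σ is d • L
  have hkey : Tendsto (fun s => (s - r)⁻¹ • (u (tsSigma T s) - u t)) F (𝓝 (d • L)) := by
    have hunion : T \ {r} = ((T \ {r}) ∩ {s | tsSigma T s ≠ t}) ∪
        ((T \ {r}) ∩ {s | tsSigma T s = t}) := by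
      ext x; by_cases hx : tsSigma T x = t <;> simp [hx]
    rw [hF, hunion, nhdsWithin_union, tendsto_sup]
    constructor
    · set S₁ := (T \ {r}) ∩ {s | tsSigma T s ≠ t} with hS₁
      have hle : 𝓝[S₁] t ≤ F := nhdsWithin_mono t inter_subset_left
      have hσs : Tendsto (tsSigma T) (𝓝[S₁] t) (𝓝 t) := by
        have h1 : Tendsto
            (fun s => tsSigma T r + (s - r) • ((s - r)⁻¹ • (tsSigma T s - tsSigma T r)))
            F (𝓝 (tsSigma T r + (t - r) • d)) := tendsto_const_nhds.add (hsr.smul hσ)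
        have h2 : (fun s => tsSigma T r + (s - r) • ((s - r)⁻¹ • (tsSigma T s - tsSigma T r)))
            =ᶠ[F] tsSigma T := by
          filter_upwards [hmem] with s hs
          rw [smul_inv_smul₀ (sub_ne_zero.mpr (show s ≠ r by simpa using hs.2)), add_sub_cancel]
        have h3 := h1.congr' h2
        rw [hσr, smul_eq_mul, htrd, add_zero] at h3
        exact h3.mono_left hle
      have hcomp : Tendsto (tsSigma T) (𝓝[S₁] t) (𝓝[T \ {tsSigma T t}] t) := by
        rw [tendsto_nhdsWithin_iff]
        refine ⟨hσs, ?_⟩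
        filter_upwards [eventually_mem_nhdsWithin] with s hs
        exact ⟨tsSigma_mem hne hbd hcl s, by rw [hσt]; simpa using hs.2⟩
      have hu1 : Tendsto (fun s => (tsSigma T s - t)⁻¹ • (u (tsSigma T s) - u t))
          (𝓝[S₁] t) (𝓝 L) := by
        have h1 := hu.comp hcomp
        rw [hσt] at h1
        refine h1.congr (fun s => ?_)
        show (t - tsSigma T s)⁻¹ • (u t - u (tsSigma T s)) = _
        rw [show t - tsSigma T s = -(tsSigma T s - t) by ring,
          show u t - u (tsSigma T s) = -(u (tsSigma T s) - u t) from (neg_sub _ _).symm,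
          inv_neg, neg_smul, smul_neg, neg_neg]
      have hq : Tendsto (fun s => (tsSigma T s - t) * (s - r)⁻¹) (𝓝[S₁] t) (𝓝 d) := by
        refine (hσ.mono_left hle).congr (fun s => ?_)
        rw [hσr, smul_eq_mul, mul_comm]
      refine (hq.smul hu1).congr' ?_
      filter_upwards [eventually_mem_nhdsWithin] with s hs
      have hne' : tsSigma T s - t ≠ 0 := sub_ne_zero.mpr hs.2
      rw [smul_smul]
      congr 1
      field_simp
    · set S₂ := (T \ {r}) ∩ {s | tsSigma T s = t} with hS₂
      have hS2sub : S₂ ⊆ {t} := fun s hs =>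
        hS2 s hs.1.1 (by simpa using hs.1.2) hs.2
      rcases hcase with hd | hrt
      · have hle2 : 𝓝[S₂] t ≤ pure t := by
          refine le_trans (nhdsWithin_mono t hS2sub) ?_
          rw [nhdsWithin, principal_singleton, inf_eq_right.mpr (pure_le_nhds t)]
        refine Tendsto.mono_left ?_ hle2
        rw [hd, zero_smul]
        have hval : (fun s => (s - r)⁻¹ • (u (tsSigma T s) - u t)) t = 0 := by
          simp [hσt]
        rw [← hval]
        exact tendsto_pure_nhds _ t
      · have hS2e : S₂ = ∅ := by
          ext s
          simp only [Set.mem_empty_iff_false, iff_false]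
          intro hs
          exact hs.1.2 (Set.mem_singleton_iff.mpr ((hS2sub hs).trans hrt.symm))
        rw [hS2e, nhdsWithin_empty]
        exact tendsto_bot
  -- assembly
  have h1 : Tendsto (fun s => ⟪(s - r)⁻¹ • (u (tsSigma T s) - u t), v s⟫ +
      ⟪u t, (s - r)⁻¹ • (v s - v r)⟫) F (𝓝 (⟪d • L, v t⟫ + ⟪u t, M⟫)) :=
    (hkey.inner hv').add (tendsto_const_nhds.inner hv)
  have heq : ∀ s : ℝ, ⟪(s - r)⁻¹ • (u (tsSigma T s) - u t), v s⟫ +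
      ⟪u t, (s - r)⁻¹ • (v s - v r)⟫
      = (s - r)⁻¹ • (⟪u (tsSigma T s), v s⟫ - ⟪u (tsSigma T r), v r⟫) := by
    intro s
    rw [hσr]
    simp only [real_inner_smul_left, real_inner_smul_right, inner_sub_left, inner_sub_right,
      smul_eq_mul]
    ring
  have h2 := h1.congr heq
  rw [show ⟪u t, M⟫ + d * ⟪L, v t⟫ = ⟪d • L, v t⟫ + ⟪u t, M⟫ by
    rw [real_inner_smul_left]; ring]
  exact h2

/-- Leibniz formula mixing Δ and ∇ derivatives: if `σ` is ∇-differentiable at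
`t ∈ T^κ_κ`, `u` is Δ-differentiable at `t` and `v` is ∇-differentiable at `t`, then
`(u ∘ σ) · v` is ∇-differentiable at `t` with derivative
`u(t) · v^∇(t) + σ^∇(t) (u^Δ(t) · v(t))`. -/
theorem stmt_11 (T : Set ℝ) (hne : T.Nonempty) (hbd : Bornology.IsBounded T) (hcl : IsClosed T)
    (hcard : ∃ x ∈ T, ∃ y ∈ T, ∃ z ∈ T, x ≠ y ∧ x ≠ z ∧ y ≠ z)
    (n : ℕ) (u v : ℝ → EuclideanSpace ℝ (Fin n))
    (t : ℝ) (ht : t ∈ Tup T ∩ Tlow T)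
    (d : ℝ) (hσ : HasNablaDerivAt T (tsSigma T) t d)
    (L : EuclideanSpace ℝ (Fin n)) (hu : HasDeltaDerivAt T u t L)
    (M : EuclideanSpace ℝ (Fin n)) (hv : HasNablaDerivAt T v t M) :
    HasNablaDerivAt T (fun s => ⟪u (tsSigma T s), v s⟫) t
      (⟪u t, M⟫ + d * ⟪L, v t⟫) := by
  obtain ⟨⟨htT, -⟩, -⟩ := ht
  have hrle : tsRho T t ≤ t := tsRho_le_s11 hne hbd hcl htT
  have htσ : t ≤ tsSigma T t := le_tsSigma_s11 hne hbd hcl htT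
  rcases eq_or_lt_of_le hrle with hrt | hrt
  · -- left-dense (or min): ρ t = t
    rcases eq_or_lt_of_le htσ with hσt | hσt
    · -- right-dense: σ t = t
      refine key_lemma hne hbd hcl htT hσt.symm ?_ hσ hu hv ?_ ?_ ?_ (Or.inr hrt)
      · rw [hrt, ← hσt]
      · rw [hrt]; simp
      · rw [hrt]; simp
      · intro s hsT hsr hσs
        by_contra hst
        rcases lt_or_gt_of_ne hst with hlt | hgt
        · obtain ⟨x, hxT, hsx, hxt⟩ := exists_between_of_tsRho_eq hne hbd hcl hrt hsT hlt
          have := tsSigma_le_s11 hne hbd hcl hxT hsx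
          rw [hσs] at this
          exact absurd this (not_le.mpr hxt)
        · have := le_tsSigma_s11 hne hbd hcl hsT
          rw [hσs] at this
          exact absurd this (not_le.mpr hgt)
    · -- right-scattered with ρ t = t : hσ forces a contradiction unless the filter is ⊥
      unfold HasNablaDerivAt at hσ ⊢
      rw [hrt] at hσ ⊢
      have hFeq : 𝓝[T \ {t}] t = 𝓝[T ∩ Set.Iio t] t := by
        rw [nhdsWithin_restrict' _ (Iio_mem_nhds hσt : Set.Iio (tsSigma T t) ∈ 𝓝 t)]
        congr 1
        ext x
        simp only [Set.mem_inter_iff, Set.mem_diff, Set.mem_singleton_iff, Set.mem_Iio]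
        constructor
        · rintro ⟨⟨hxT, hxt⟩, hxlt⟩
          refine ⟨hxT, ?_⟩
          rcases lt_trichotomy x t with h | h | h
          · exact h
          · exact absurd h hxt
          · exact absurd (tsSigma_le_s11 hne hbd hcl hxT h) (not_le.mpr hxlt)
        · rintro ⟨hxT, hxlt⟩
          exact ⟨⟨hxT, ne_of_lt hxlt⟩, hxlt.trans hσt⟩
      rw [hFeq] at hσ ⊢
      rcases eq_or_neBot (𝓝[T ∩ Set.Iio t] t) with hbot | hnb
      · rw [hbot]; exact tendsto_bot
      · exfalso
        have hts : Tendsto (fun s : ℝ => t - s) (𝓝[T ∩ Set.Iio t] t) (𝓝[>] (0:ℝ)) := by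
          rw [tendsto_nhdsWithin_iff]
          constructor
          · have h0 : Tendsto (fun s : ℝ => t - s) (𝓝 t) (𝓝 (t - t)) :=
              (continuous_const.sub continuous_id).tendsto t
            rw [sub_self] at h0
            exact h0.mono_left nhdsWithin_le_nhds
          · filter_upwards [eventually_mem_nhdsWithin] with s hs
            exact sub_pos.mpr (Set.mem_Iio.mp hs.2)
        have hatTop : Tendsto (fun s : ℝ => (t - s)⁻¹ * (tsSigma T t - t))
            (𝓝[T ∩ Set.Iio t] t) atTop :=
          (tendsto_inv_nhdsGT_zero.comp hts).atTop_mul_const (sub_pos.mpr hσt)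
        have hlow : (fun s : ℝ => (t - s)⁻¹ * (tsSigma T t - t)) ≤ᶠ[𝓝[T ∩ Set.Iio t] t]
            (fun s => (s - t)⁻¹ • (tsSigma T s - tsSigma T t)) := by
          filter_upwards [eventually_mem_nhdsWithin] with s hs
          have hst : s < t := hs.2
          have hσs : tsSigma T s ≤ t := tsSigma_le_s11 hne hbd hcl htT hst
          have h1 : (0:ℝ) < t - s := sub_pos.mpr hst
          have h2 : (s - t)⁻¹ • (tsSigma T s - tsSigma T t)
              = (t - s)⁻¹ * (tsSigma T t - tsSigma T s) := by
            rw [smul_eq_mul, show s - t = -(t - s) by ring, inv_neg]; ring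
          rw [h2]
          exact mul_le_mul_of_nonneg_left (by linarith) (inv_nonneg.mpr h1.le)
        exact not_tendsto_nhds_of_tendsto_atTop (tendsto_atTop_mono' _ hlow hatTop) d hσ
  · -- left-scattered: ρ t < t
    have hσr : tsSigma T (tsRho T t) = t := tsSigma_tsRho hne hbd hcl htT hrt
    have hpure : pure t ≤ 𝓝[T \ {tsRho T t}] t :=
      pure_le_nhdsWithin ⟨htT, by simp [ne_of_gt hrt]⟩
    rcases eq_or_lt_of_le htσ with hσt | hσt
    · -- right-dense
      have hd0 : d = 0 := by
        have h1 := pure_lim (hσ.mono_left hpure)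
        simp only [hσr, ← hσt, sub_self, smul_zero] at h1
        exact h1.symm
      have hvM : v t - v (tsRho T t) = (t - tsRho T t) • M := by
        have h1 := pure_lim (hv.mono_left hpure)
        rw [← h1, smul_inv_smul₀ (sub_ne_zero.mpr (ne_of_gt hrt))]
      refine key_lemma hne hbd hcl htT hσt.symm hσr hσ hu hv hvM
        (by rw [hd0, mul_zero]) ?_ (Or.inl hd0)
      intro s hsT hsr hσs
      by_contra hst
      rcases lt_or_gt_of_ne hst with hlt | hgt
      · have hsρ : s ≤ tsRho T t := le_tsRho_s11 hne hbd hcl hsT hlt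
        have hslt : s < tsRho T t := lt_of_le_of_ne hsρ hsr
        have h3 := tsSigma_le_s11 hne hbd hcl (tsRho_mem hne hbd hcl t) hslt
        rw [hσs] at h3
        exact absurd h3 (not_le.mpr hrt)
      · have h3 := le_tsSigma_s11 hne hbd hcl hsT
        rw [hσs] at h3
        exact absurd h3 (not_le.mpr hgt)
    · -- isolated point: all filters are `pure t`
      unfold HasNablaDerivAt at hσ hv ⊢
      unfold HasDeltaDerivAt at hu
      have hmemIoo : Set.Ioo (tsRho T t) (tsSigma T t) ∈ 𝓝 t := Ioo_mem_nhds hrt hσt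
      have hsing : ∀ (y : ℝ), y ≠ t →
          (T \ {y}) ∩ Set.Ioo (tsRho T t) (tsSigma T t) = {t} := by
        intro y hy
        ext x
        simp only [Set.mem_inter_iff, Set.mem_diff, Set.mem_singleton_iff, Set.mem_Ioo]
        constructor
        · rintro ⟨⟨hxT, hxy⟩, hx1, hx2⟩
          rcases lt_trichotomy x t with h | h | h
          · exact absurd (le_tsRho_s11 hne hbd hcl hxT h) (not_le.mpr hx1)
          · exact h
          · exact absurd (tsSigma_le_s11 hne hbd hcl hxT h) (not_le.mpr hx2)
        · rintro rfl
          exact ⟨⟨htT, fun h => hy (by rw [h])⟩, hrt, hσt⟩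
      have hFp : 𝓝[T \ {tsRho T t}] t = pure t := by
        rw [nhdsWithin_restrict' _ hmemIoo, hsing _ (ne_of_lt hrt), nhdsWithin,
          principal_singleton, inf_eq_right.mpr (pure_le_nhds t)]
      have hFu : 𝓝[T \ {tsSigma T t}] t = pure t := by
        rw [nhdsWithin_restrict' _ hmemIoo, hsing _ (ne_of_gt hσt), nhdsWithin,
          principal_singleton, inf_eq_right.mpr (pure_le_nhds t)]
      rw [hFp] at hσ hv ⊢
      rw [hFu] at hu
      have hd2 : d = (t - tsRho T t)⁻¹ * (tsSigma T t - t) := by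
        have h := pure_lim hσ
        simp only [hσr, smul_eq_mul] at h
        exact h.symm
      have hM2 : M = (t - tsRho T t)⁻¹ • (v t - v (tsRho T t)) := by
        simpa using (pure_lim hv).symm
      have hL2 : L = (tsSigma T t - t)⁻¹ • (u (tsSigma T t) - u t) := by
        simpa using (pure_lim hu).symm
      have hne1 : tsSigma T t - t ≠ 0 := sub_ne_zero.mpr (ne_of_gt hσt)
      have hne2 : t - tsRho T t ≠ 0 := sub_ne_zero.mpr (ne_of_gt hrt)
      have hkey : ⟪u t, M⟫ + d * ⟪L, v t⟫
          = (t - tsRho T t)⁻¹ • (⟪u (tsSigma T t), v t⟫ - ⟪u (tsSigma T (tsRho T t)), v (tsRho T t)⟫) := by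
        rw [hd2, hM2, hL2, hσr]
        simp only [real_inner_smul_left, real_inner_smul_right, inner_sub_left,
          inner_sub_right, smul_eq_mul]
        field_simp
        ring
      rw [hkey]
      exact tendsto_pure_nhds _ t
end

section
/- Let T = {0} ∪ {1/k! : k ∈ ℕ}. Then σ is not ∇-differentiable at 0; i.e., the limit of σ(s)/s as s → 0 along T \ {0} does not exist in ℝ (it tends to +∞). -/
open Set Filter Topology RealInnerProductSpace

noncomputable def myT : Set ℝ := insert 0 (Set.range fun k : ℕ => 1 / (k.factorial : ℝ))

lemma fk_pos (k : ℕ) : (0:ℝ) < 1 / (k.factorial : ℝ) := by positivity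

lemma fk_mem (k : ℕ) : (1 / (k.factorial : ℝ)) ∈ myT := Or.inr ⟨k, rfl⟩

lemma myT_nonneg : ∀ x ∈ myT, (0:ℝ) ≤ x := by
  rintro x (rfl | ⟨k, rfl⟩)
  · exact le_refl 0
  · exact (fk_pos k).le

lemma tendsto_fk : Tendsto (fun k : ℕ => 1 / (k.factorial : ℝ)) atTop (𝓝 0) := by
  simpa using FloorSemiring.tendsto_pow_div_factorial_atTop (1:ℝ)

lemma neBot_T : (𝓝[myT \ {0}] (0:ℝ)).NeBot := by
  refine mem_closure_iff_nhdsWithin_neBot.mp ?_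
  exact mem_closure_of_tendsto tendsto_fk
    (Eventually.of_forall fun k => ⟨fk_mem k, (fk_pos k).ne'⟩)

lemma rho0 : tsRho myT 0 = 0 := by
  have h : ¬ ({s | s ∈ myT ∧ s < 0}).Nonempty := by
    rintro ⟨s, hs, hlt⟩; exact absurd (myT_nonneg s hs) (not_le.mpr hlt)
  rw [tsRho, if_neg h]
  exact le_antisymm (csInf_le ⟨0, myT_nonneg⟩ (Or.inl rfl)) (le_csInf ⟨0, Or.inl rfl⟩ myT_nonneg)

lemma sigma0 : tsSigma myT 0 = 0 := by
  have hne : ({s | s ∈ myT ∧ 0 < s}).Nonempty := ⟨1, by simpa using fk_mem 0, one_pos⟩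
  have hbdd : BddBelow {s | s ∈ myT ∧ 0 < s} := ⟨0, fun x hx => hx.2.le⟩
  rw [tsSigma, if_pos hne]
  refine le_antisymm ?_ (le_csInf hne fun x hx => hx.2.le)
  exact ge_of_tendsto' tendsto_fk (fun k => csInf_le hbdd ⟨fk_mem k, fk_pos k⟩)

lemma fk_le_fk {j k : ℕ} (h : j ≤ k) : 1 / (k.factorial : ℝ) ≤ 1 / (j.factorial : ℝ) := by
  apply one_div_le_one_div_of_le (by positivity)
  exact_mod_cast Nat.factorial_le h

lemma fk_lt_fk {j k : ℕ} (hj : 0 < j) (h : j < k) :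
    1 / (k.factorial : ℝ) < 1 / (j.factorial : ℝ) := by
  apply one_div_lt_one_div_of_lt (by positivity)
  exact_mod_cast Nat.factorial_lt_of_lt hj h

lemma sigma_succ (m : ℕ) :
    tsSigma myT (1 / ((m+2).factorial : ℝ)) = 1 / ((m+1).factorial : ℝ) := by
  set S := {s | s ∈ myT ∧ 1 / ((m+2).factorial : ℝ) < s} with hS
  have hmem : (1 / ((m+1).factorial : ℝ)) ∈ S :=
    ⟨fk_mem (m+1), fk_lt_fk (Nat.succ_pos m) (Nat.lt_succ_self (m+1))⟩
  have hne : S.Nonempty := ⟨_, hmem⟩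
  have hlb : ∀ x ∈ S, 1 / ((m+1).factorial : ℝ) ≤ x := by
    rintro x ⟨(rfl | ⟨j, rfl⟩), hx⟩
    · exact absurd hx (not_lt.mpr (fk_pos _).le)
    · apply fk_le_fk
      by_contra hj
      push_neg at hj
      have h1 : ((m+2).factorial : ℝ) ≤ (j.factorial : ℝ) := by
        exact_mod_cast Nat.factorial_le hj
      have h2 : (j.factorial : ℝ) < ((m+2).factorial : ℝ) :=
        lt_of_one_div_lt_one_div (by positivity) hx
      linarith
  rw [tsSigma, if_pos hne]
  exact le_antisymm (csInf_le ⟨_, hlb⟩ hmem) (le_csInf hne hlb)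

lemma main_tendsto : Tendsto (fun s => tsSigma myT s / s) (𝓝[myT \ {0}] 0) atTop := by
  rw [tendsto_atTop]
  intro M
  obtain ⟨N, hN⟩ := exists_nat_ge M
  rw [eventually_nhdsWithin_iff]
  have hball : Metric.ball (0:ℝ) (1/((N+1).factorial : ℝ)) ∈ 𝓝 (0:ℝ) :=
    Metric.ball_mem_nhds _ (fk_pos _)
  filter_upwards [hball] with s hs hsT
  obtain ⟨(rfl|⟨k, rfl⟩), hs0⟩ := hsT
  · exact absurd rfl hs0
  · have hlt : 1/(k.factorial : ℝ) < 1/((N+1).factorial : ℝ) := by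
      have := mem_ball_iff_norm.mp hs
      rw [sub_zero] at this
      calc 1/(k.factorial : ℝ) ≤ |1/(k.factorial : ℝ)| := le_abs_self _
        _ < _ := this
    have hfac : ((N+1).factorial : ℝ) < (k.factorial : ℝ) :=
      lt_of_one_div_lt_one_div (by positivity) hlt
    have hk : N + 2 ≤ k := by
      have : (N+1).factorial < k.factorial := by exact_mod_cast hfac
      have := (Nat.factorial_lt (Nat.succ_pos N)).mp this
      omega
    obtain ⟨m, rfl⟩ := Nat.exists_eq_add_of_le hk
    rw [show N + 2 + m = (N + m) + 2 from by omega, sigma_succ (N + m)]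
    have hfac2 : (((N+m)+2).factorial : ℝ) = ((N+m+2 : ℕ) : ℝ) * (((N+m)+1).factorial : ℝ) := by
      exact_mod_cast Nat.factorial_succ (N+m+1)
    have hratio : (1/(((N+m)+1).factorial : ℝ)) / (1/(((N+m)+2).factorial : ℝ))
        = ((N+m+2 : ℕ) : ℝ) := by
      rw [div_div_div_comm, one_div_one, hfac2]
      field_simp
    rw [hratio]
    calc M ≤ (N : ℝ) := hN
      _ ≤ ((N+m+2 : ℕ) : ℝ) := by exact_mod_cast by omega

/-- For `T = {0} ∪ {1/k! : k ∈ ℕ}`, `σ` is not ∇-differentiable at `0`: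
the limit of `σ(s)/s` as `s → 0` along `T \ {0}` does not exist in `ℝ` (it tends to `+∞`). -/
theorem stmt_14 :
    (¬ ∃ L : ℝ, HasNablaDerivAt (insert 0 (Set.range fun k : ℕ => 1 / (k.factorial : ℝ)))
        (tsSigma (insert 0 (Set.range fun k : ℕ => 1 / (k.factorial : ℝ)))) 0 L) ∧
    Filter.Tendsto
      (fun s => tsSigma (insert 0 (Set.range fun k : ℕ => 1 / (k.factorial : ℝ))) s / s)
      (nhdsWithin 0 (insert 0 (Set.range fun k : ℕ => 1 / (k.factorial : ℝ)) \ {0}))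
      Filter.atTop := by
  constructor
  · rintro ⟨L, hL⟩
    have hL' : Tendsto (fun s => (s - tsRho myT 0)⁻¹ • (tsSigma myT s - tsSigma myT (tsRho myT 0)))
        (𝓝[myT \ {tsRho myT 0}] 0) (𝓝 L) := hL
    rw [rho0, sigma0] at hL'
    have hL'' : Tendsto (fun s => tsSigma myT s / s) (𝓝[myT \ {0}] 0) (𝓝 L) := by
      refine (tendsto_congr fun s => ?_).mp hL'
      simp [smul_eq_mul, sub_zero, div_eq_inv_mul]
    have := neBot_T
    exact not_tendsto_nhds_of_tendsto_atTop main_tendsto L hL''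
  · exact main_tendsto
end

section
/- Let T = {0} ∪ {z_k⁻ : k ∈ ℕ} ∪ {z_k⁺ : k ∈ ℕ} where (z_k⁻) is a strictly increasing sequence of negative reals tending to 0 and (z_k⁺) is a strictly decreasing sequence of positive reals tending to 0. If lim_{k→∞} z_{k+1}⁻/z_k⁻ = lim_{k→∞} z_{k−1}⁺/z_k⁺ = ℓ, then necessarily ℓ = 1 and σ is ∇-differentiable at 0 with σ^∇(0) = 1. -/
open Set Filter Topology RealInnerProductSpace

/-- For `T = {0} ∪ {z_k⁻} ∪ {z_k⁺}` with `z_k⁻ ↑ 0` negative and `z_k⁺ ↓ 0`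
positive, if `z_{k+1}⁻/z_k⁻ → ℓ` and `z_{k−1}⁺/z_k⁺ → ℓ`, then `ℓ = 1` and `σ` is
∇-differentiable at `0` with `σ^∇(0) = 1`. -/
theorem stmt_16 (zm zp : ℕ → ℝ)
    (hzm_neg : ∀ k, zm k < 0) (hzm_mono : StrictMono zm)
    (hzm_lim : Filter.Tendsto zm Filter.atTop (nhds 0))
    (hzp_pos : ∀ k, 0 < zp k) (hzp_anti : StrictAnti zp)
    (hzp_lim : Filter.Tendsto zp Filter.atTop (nhds 0))
    (ℓ : ℝ)
    (hm : Filter.Tendsto (fun k => zm (k + 1) / zm k) Filter.atTop (nhds ℓ))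
    (hp : Filter.Tendsto (fun k => zp k / zp (k + 1)) Filter.atTop (nhds ℓ)) :
    ℓ = 1 ∧
    HasNablaDerivAt (insert 0 (Set.range zm ∪ Set.range zp))
      (tsSigma (insert 0 (Set.range zm ∪ Set.range zp))) 0 1 := by
  set T : Set ℝ := insert 0 (Set.range zm ∪ Set.range zp) with hT
  have h0T : (0:ℝ) ∈ T := Set.mem_insert _ _
  have hmemm : ∀ k, zm k ∈ T := fun k => Set.mem_insert_of_mem _ (Or.inl ⟨k, rfl⟩)
  have hmemp : ∀ k, zp k ∈ T := fun k => Set.mem_insert_of_mem _ (Or.inr ⟨k, rfl⟩)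
  -- ℓ = 1
  have hle : ℓ ≤ 1 := by
    refine le_of_tendsto hm (Filter.Eventually.of_forall fun k => ?_)
    rw [div_le_one_iff]
    exact Or.inr (Or.inr ⟨hzm_neg k, (hzm_mono k.lt_succ_self).le⟩)
  have hge : 1 ≤ ℓ := by
    refine ge_of_tendsto hp (Filter.Eventually.of_forall fun k => ?_)
    exact (one_le_div (hzp_pos (k+1))).2 (hzp_anti k.lt_succ_self).le
  have hℓ : ℓ = 1 := le_antisymm hle hge
  subst hℓ
  -- ρ(0) = 0
  have hrho : tsRho T 0 = 0 := by
    have hset : {s | s ∈ T ∧ s < 0} = Set.range zm := by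
      ext s
      simp only [Set.mem_setOf_eq, hT, Set.mem_insert_iff, Set.mem_union, Set.mem_range]
      constructor
      · rintro ⟨rfl | ⟨k, rfl⟩ | ⟨k, rfl⟩, hlt⟩
        · exact absurd hlt (lt_irrefl 0)
        · exact ⟨k, rfl⟩
        · exact absurd hlt (not_lt.2 (hzp_pos k).le)
      · rintro ⟨k, rfl⟩
        exact ⟨Or.inr (Or.inl ⟨k, rfl⟩), hzm_neg k⟩
    rw [tsRho, hset, if_pos (Set.range_nonempty zm)]
    exact (isLUB_of_tendsto_atTop hzm_mono.monotone hzm_lim).csSup_eq (Set.range_nonempty zm)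
  -- σ(0) = 0
  have hsig0 : tsSigma T 0 = 0 := by
    have hset : {s | s ∈ T ∧ 0 < s} = Set.range zp := by
      ext s
      simp only [Set.mem_setOf_eq, hT, Set.mem_insert_iff, Set.mem_union, Set.mem_range]
      constructor
      · rintro ⟨rfl | ⟨k, rfl⟩ | ⟨k, rfl⟩, hlt⟩
        · exact absurd hlt (lt_irrefl 0)
        · exact absurd hlt (not_lt.2 (hzm_neg k).le)
        · exact ⟨k, rfl⟩
      · rintro ⟨k, rfl⟩
        exact ⟨Or.inr (Or.inr ⟨k, rfl⟩), hzp_pos k⟩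
    rw [tsSigma, hset, if_pos (Set.range_nonempty zp)]
    exact (isGLB_of_tendsto_atTop hzp_anti.antitone hzp_lim).csInf_eq (Set.range_nonempty zp)
  -- σ(zm k) = zm (k+1)
  have hsigm : ∀ k, tsSigma T (zm k) = zm (k + 1) := by
    intro k
    have hne : ({s | s ∈ T ∧ zm k < s}).Nonempty := ⟨0, h0T, hzm_neg k⟩
    rw [tsSigma, if_pos hne]
    refine IsLeast.csInf_eq ⟨⟨hmemm _, hzm_mono k.lt_succ_self⟩, ?_⟩
    rintro s ⟨hs, hlt⟩
    simp only [hT, Set.mem_insert_iff, Set.mem_union, Set.mem_range] at hs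
    rcases hs with rfl | ⟨j, rfl⟩ | ⟨j, rfl⟩
    · exact (hzm_neg _).le
    · exact hzm_mono.monotone (Nat.succ_le_of_lt (hzm_mono.lt_iff_lt.1 hlt))
    · exact ((hzm_neg _).trans (hzp_pos j)).le
  -- σ(zp (k+1)) = zp k
  have hsigp : ∀ k, tsSigma T (zp (k + 1)) = zp k := by
    intro k
    have hne : ({s | s ∈ T ∧ zp (k+1) < s}).Nonempty :=
      ⟨zp k, hmemp k, hzp_anti k.lt_succ_self⟩
    rw [tsSigma, if_pos hne]
    refine IsLeast.csInf_eq ⟨⟨hmemp _, hzp_anti k.lt_succ_self⟩, ?_⟩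
    rintro s ⟨hs, hlt⟩
    simp only [hT, Set.mem_insert_iff, Set.mem_union, Set.mem_range] at hs
    rcases hs with rfl | ⟨j, rfl⟩ | ⟨j, rfl⟩
    · exact absurd hlt (not_lt.2 (hzp_pos _).le)
    · exact absurd hlt (not_lt.2 ((hzm_neg j).trans (hzp_pos _)).le)
    · exact hzp_anti.antitone (Nat.lt_succ_iff.1 (hzp_anti.lt_iff_gt.1 hlt))
  refine ⟨rfl, ?_⟩
  unfold HasNablaDerivAt
  rw [hrho, hsig0]
  rw [Metric.tendsto_nhdsWithin_nhds]
  intro ε hε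
  obtain ⟨N1, h1⟩ := (Metric.tendsto_atTop.1 hm) ε hε
  obtain ⟨N2, h2⟩ := (Metric.tendsto_atTop.1 hp) ε hε
  set N := max N1 N2 with hN
  refine ⟨min (-(zm N)) (zp N), lt_min (neg_pos.2 (hzm_neg N)) (hzp_pos N), ?_⟩
  intro x hx hdist
  obtain ⟨hxT, hx0⟩ := hx
  have hx0' : x ≠ 0 := hx0
  simp only [hT, Set.mem_insert_iff, Set.mem_union, Set.mem_range] at hxT
  rcases hxT with rfl | ⟨k, rfl⟩ | ⟨k, rfl⟩
  · exact absurd rfl hx0'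
  · -- x = zm k
    have hd : dist (zm k) 0 = -(zm k) := by
      rw [Real.dist_eq, sub_zero, abs_of_neg (hzm_neg k)]
    have hk : N < k := by
      apply hzm_mono.lt_iff_lt.1
      have := lt_of_lt_of_le (hd ▸ hdist) (min_le_left _ _)
      linarith
    have hgoal : dist (zm (k+1) / zm k) 1 < ε := h1 k (le_trans (le_max_left _ _) hk.le)
    simpa [hsigm k, smul_eq_mul, sub_zero, inv_mul_eq_div] using hgoal
  · -- x = zp k
    have hd : dist (zp k) 0 = zp k := by
      rw [Real.dist_eq, sub_zero, abs_of_pos (hzp_pos k)]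
    have hk : N < k := by
      apply hzp_anti.lt_iff_gt.1
      exact lt_of_lt_of_le (hd ▸ hdist) (min_le_right _ _)
    obtain ⟨j, rfl⟩ : ∃ j, k = j + 1 := ⟨k - 1, by omega⟩
    have hj : N2 ≤ j := by omega
    have hgoal : dist (zp j / zp (j+1)) 1 < ε := h2 j hj
    simpa [hsigp j, smul_eq_mul, sub_zero, inv_mul_eq_div] using hgoal
end
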